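/- arXiv:2204.05664 — 4 statements merged into one kernel-verified Lean document; each statement's English description precedes it below -/
import Mathlib

section
/- The signed Roman domination number of the Kneser graph K_{11,2} equals 3, i.e. γ_sR(K_{11,2}) = 3. -/
def kneserGraph (n k : ℕ) : SimpleGraph {s : Finset (Fin n) // s.card = k} where
  Adj a b := a ≠ b ∧ Disjoint a.1 b.1
  symm := ⟨fun a b h => ⟨h.1.symm, h.2.symm⟩⟩
  loopless := ⟨fun a h => h.1 rfl⟩

def IsRDF {V : Type*} (G : SimpleGraph V) (f : V → ℕ) : Prop :=
  (∀ v, f v ≤ 2) ∧ ∀ v, f v = 0 → ∃ u, G.Adj v u ∧ f u = 2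

noncomputable def romanDomNum {V : Type*} [Fintype V] (G : SimpleGraph V) : ℕ :=
  sInf {w | ∃ f, IsRDF G f ∧ ∑ v, f v = w}

open Classical in
def IsTRDF {V : Type*} [Fintype V] (G : SimpleGraph V) (f : V → ℕ) : Prop :=
  IsRDF G f ∧ ∀ v, 1 ≤ ∑ u ∈ Finset.univ.filter (fun u => G.Adj v u), f u

noncomputable def totalRomanDomNum {V : Type*} [Fintype V] (G : SimpleGraph V) : ℕ :=
  sInf {w | ∃ f, IsTRDF G f ∧ ∑ v, f v = w}

open Classical in
def IsSRDF {V : Type*} [Fintype V] (G : SimpleGraph V) (f : V → ℤ) : Prop :=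
  (∀ v, f v = -1 ∨ f v = 1 ∨ f v = 2) ∧
  (∀ v, f v = -1 → ∃ u, G.Adj v u ∧ f u = 2) ∧
  (∀ v, 1 ≤ f v + ∑ u ∈ Finset.univ.filter (fun u => G.Adj v u), f u)

noncomputable def signedRomanDomNum {V : Type*} [Fintype V] (G : SimpleGraph V) : ℤ :=
  sInf {w | ∃ f, IsSRDF G f ∧ ∑ v, f v = w}

def IsDominatingSet {V : Type*} (G : SimpleGraph V) (S : Finset V) : Prop :=
  ∀ v, v ∉ S → ∃ u ∈ S, G.Adj v u

noncomputable def domNum {V : Type*} [Fintype V] (G : SimpleGraph V) : ℕ :=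
  sInf {m | ∃ S : Finset V, IsDominatingSet G S ∧ S.card = m}




namespace K112


abbrev V : Type := {s : Finset (Fin 11) // s.card = 2}

noncomputable def gg (f : V → ℤ) (i : Fin 11) : ℤ :=
  ∑ v ∈ Finset.univ.filter (fun v : V => i ∈ v.1), f v

def pairV (a b : Fin 11) (h : a ≠ b) : V := ⟨{a, b}, Finset.card_pair h⟩

lemma filter_both (a b : Fin 11) (h : a ≠ b) :
    Finset.univ.filter (fun v : V => a ∈ v.1 ∧ b ∈ v.1) = {pairV a b h} := by
  ext v
  simp only [Finset.mem_filter, Finset.mem_univ, true_and, Finset.mem_singleton, pairV]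
  constructor
  · rintro ⟨ha, hb⟩
    have hsub : ({a, b} : Finset (Fin 11)) ⊆ v.1 :=
      Finset.insert_subset ha (Finset.singleton_subset_iff.2 hb)
    have hcard : v.1.card ≤ ({a, b} : Finset (Fin 11)).card := by
      rw [Finset.card_pair h, v.2]
    have := Finset.eq_of_subset_of_card_le hsub hcard
    exact Subtype.ext this.symm
  · rintro rfl
    constructor <;> simp

lemma sum_PaErase (a : Fin 11) (h : Fin 11 → ℤ) :
    ∑ v ∈ Finset.univ.filter (fun v : V => a ∈ v.1), (∑ i ∈ v.1.erase a, h i)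
      = ∑ i ∈ Finset.univ.erase a, h i := by
  have step1 : ∀ v : V, ∑ i ∈ v.1.erase a, h i
      = ∑ i : Fin 11, if i ∈ v.1.erase a then h i else 0 := by
    intro v
    rw [Finset.sum_ite_mem, Finset.univ_inter]
  simp_rw [step1]
  rw [Finset.sum_comm]
  have step2 : ∀ i : Fin 11,
      (∑ v ∈ Finset.univ.filter (fun v : V => a ∈ v.1), if i ∈ v.1.erase a then h i else 0)
        = if i = a then 0 else h i := by
    intro i
    rw [Finset.sum_ite, Finset.sum_const_zero, add_zero, Finset.sum_const]
    rw [Finset.filter_filter]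
    by_cases hia : i = a
    · subst hia
      have : Finset.filter (fun v : V => i ∈ v.1 ∧ i ∈ v.1.erase i) Finset.univ = ∅ := by
        apply Finset.filter_false_of_mem
        intro v _
        simp
      rw [this]
      simp
    · have hne : a ≠ i := fun hh => hia hh.symm
      have : Finset.filter (fun v : V => a ∈ v.1 ∧ i ∈ v.1.erase a) Finset.univ
          = Finset.filter (fun v : V => a ∈ v.1 ∧ i ∈ v.1) Finset.univ := by
        apply Finset.filter_congr
        intro v _
        simp [Finset.mem_erase, hia]
      rw [this, filter_both a i hne]
      simp [hia]
  simp_rw [step2]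
  have hrw : ∀ x : Fin 11, (if x = a then (0:ℤ) else h x)
      = h x - (if x = a then h x else 0) := by
    intro x; by_cases hx : x = a <;> simp [hx]
  simp_rw [hrw]
  rw [Finset.sum_sub_distrib, Finset.sum_ite_eq' Finset.univ a h]
  have h2 := Finset.sum_erase_add (Finset.univ : Finset (Fin 11)) h (Finset.mem_univ a)
  simp only [Finset.mem_univ, if_pos]
  omega

lemma erase_card_one (a : Fin 11) (v : V) (hv : a ∈ v.1) : (v.1.erase a).card = 1 := by
  have := Finset.card_erase_of_mem hv
  rw [v.2] at this
  simpa using this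

lemma card_Pa (a : Fin 11) :
    ((Finset.univ.filter (fun v : V => a ∈ v.1)).card : ℤ) = 10 := by
  have h := sum_PaErase a (fun _ => (1:ℤ))
  have hL : ∑ v ∈ Finset.univ.filter (fun v : V => a ∈ v.1), (∑ _i ∈ v.1.erase a, (1:ℤ))
      = ((Finset.univ.filter (fun v : V => a ∈ v.1)).card : ℤ) := by
    rw [Finset.sum_congr rfl (fun v hv => show (∑ _i ∈ v.1.erase a, (1:ℤ)) = 1 by
      rw [Finset.sum_const, erase_card_one a v (Finset.mem_filter.1 hv).2, one_smul])]
    simp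
  have hR : ∑ _i ∈ Finset.univ.erase a, (1:ℤ) = 10 := by
    rw [Finset.sum_const, Finset.card_erase_of_mem (Finset.mem_univ a)]
    simp
  rw [hL, hR] at h
  exact h

lemma sum_gg (f : V → ℤ) : ∑ i, gg f i = 2 * ∑ v : V, f v := by
  unfold gg
  simp_rw [Finset.sum_filter]
  rw [Finset.sum_comm]
  have step : ∀ v : V, (∑ i : Fin 11, if i ∈ v.1 then f v else 0) = 2 * f v := by
    intro v
    rw [Finset.sum_ite_mem, Finset.univ_inter, Finset.sum_const, v.2]
    simp [two_mul]
  simp_rw [step]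
  rw [← Finset.mul_sum]

lemma sum_V_mem (h : Fin 11 → ℤ) : ∑ v : V, ∑ i ∈ v.1, h i = 10 * ∑ i, h i := by
  have step1 : ∀ v : V, ∑ i ∈ v.1, h i = ∑ i : Fin 11, if i ∈ v.1 then h i else 0 := by
    intro v; rw [Finset.sum_ite_mem, Finset.univ_inter]
  simp_rw [step1]
  rw [Finset.sum_comm, Finset.mul_sum]
  refine Finset.sum_congr rfl fun i _ => ?_
  rw [Finset.sum_ite, Finset.sum_const_zero, add_zero, Finset.sum_const,
    nsmul_eq_mul, card_Pa i]

lemma card_V : ((Finset.univ : Finset V).card : ℤ) = 55 := by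
  rw [Finset.card_univ]
  have := Fintype.card_finset_len (α := Fin 11) 2
  rw [show Fintype.card (Fin 11) = 11 from rfl] at this
  rw [this]
  rfl

lemma key (f : V → ℤ) (hf : IsSRDF (kneserGraph 11 2) f) (v : V) :
    ∑ i ∈ v.1, gg f i ≤ (∑ u : V, f u) + 2 * f v - 1 := by
  classical
  obtain ⟨a, b, hab, hv⟩ := Finset.card_eq_two.mp v.2
  have hc := hf.2.2 v
  have hfil : (Finset.univ.filter (fun u => (kneserGraph 11 2).Adj v u))
      = Finset.univ.filter (fun u : V => Disjoint v.1 u.1) := by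
    ext u
    simp only [Finset.mem_filter, Finset.mem_univ, true_and]
    constructor
    · rintro ⟨_, hd⟩; exact hd
    · intro hd
      refine ⟨?_, hd⟩
      rintro rfl
      have : v.1 = ∅ := (Finset.disjoint_self_iff_empty _).mp hd
      have h2 := v.2
      rw [this] at h2
      simp at h2
  rw [hfil] at hc
  have hsplit := Finset.sum_filter_add_sum_filter_not Finset.univ
    (fun u : V => Disjoint v.1 u.1) f
  have hnd : Finset.univ.filter (fun u : V => ¬ Disjoint v.1 u.1)
      = Finset.univ.filter (fun u : V => a ∈ u.1 ∨ b ∈ u.1) := by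
    ext u
    simp only [Finset.mem_filter, Finset.mem_univ, true_and,
      Finset.not_disjoint_iff, hv]
    constructor
    · rintro ⟨x, hx1, hx2⟩
      rcases Finset.mem_insert.mp hx1 with rfl | hx1
      · exact Or.inl hx2
      · rw [Finset.mem_singleton] at hx1; subst hx1; exact Or.inr hx2
    · rintro (hx | hx)
      · exact ⟨a, by simp, hx⟩
      · exact ⟨b, by simp, hx⟩
  have hui := Finset.sum_union_inter
    (s₁ := Finset.univ.filter (fun u : V => a ∈ u.1))
    (s₂ := Finset.univ.filter (fun u : V => b ∈ u.1)) (f := f)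
  rw [← Finset.filter_or, ← Finset.filter_and, filter_both a b hab,
    Finset.sum_singleton] at hui
  have hPv : pairV a b hab = v := Subtype.ext hv.symm
  rw [hPv] at hui
  rw [hnd] at hsplit
  rw [hv, Finset.sum_pair hab]
  have hga : gg f a = ∑ u ∈ Finset.univ.filter (fun u : V => a ∈ u.1), f u := rfl
  have hgb : gg f b = ∑ u ∈ Finset.univ.filter (fun u : V => b ∈ u.1), f u := rfl
  linarith [hc, hsplit, hui]

theorem lower_bound (f : V → ℤ) (hf : IsSRDF (kneserGraph 11 2) f) :
    3 ≤ ∑ v : V, f v := by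
  classical
  set W := ∑ v : V, f v with hW
  have hgg := sum_gg f
  have hRHS : ∑ v : V, (W + 2 * f v - 1) = 55 * W + 2 * W - 55 := by
    rw [Finset.sum_sub_distrib, Finset.sum_add_distrib, Finset.sum_const,
      Finset.sum_const, ← Finset.mul_sum]
    rw [nsmul_eq_mul, nsmul_eq_mul, card_V, ← hW]
    ring
  have hsum : 10 * ∑ i, gg f i ≤ 55 * W + 2 * W - 55 := by
    rw [← hRHS, ← sum_V_mem (gg f)]
    exact Finset.sum_le_sum (fun v _ => key f hf v)
  have hW2 : 2 ≤ W := by omega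
  by_contra hlt
  push_neg at hlt
  have hWeq : W = 2 := by omega
  have hex : ∃ a, 1 ≤ gg f a := by
    by_contra hno; push_neg at hno
    have hnp : ∑ i, gg f i ≤ 0 := Finset.sum_nonpos (fun i _ => by
      have := hno i; omega)
    omega
  obtain ⟨a, ha⟩ := hex
  have hkey : ∑ v ∈ Finset.univ.filter (fun v : V => a ∈ v.1), (∑ i ∈ v.1, gg f i)
      ≤ ∑ v ∈ Finset.univ.filter (fun v : V => a ∈ v.1), (W + 2 * f v - 1) :=
    Finset.sum_le_sum (fun v _ => key f hf v)
  have hL : ∑ v ∈ Finset.univ.filter (fun v : V => a ∈ v.1), (∑ i ∈ v.1, gg f i)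
      = 10 * gg f a + ∑ i ∈ Finset.univ.erase a, gg f i := by
    have step : ∀ v ∈ Finset.univ.filter (fun v : V => a ∈ v.1),
        (∑ i ∈ v.1, gg f i) = gg f a + ∑ i ∈ v.1.erase a, gg f i := by
      intro v hv
      exact (Finset.add_sum_erase v.1 (gg f) (Finset.mem_filter.1 hv).2).symm
    rw [Finset.sum_congr rfl step, Finset.sum_add_distrib, Finset.sum_const,
      sum_PaErase a (gg f), nsmul_eq_mul, card_Pa a]
  have hErase : ∑ i ∈ Finset.univ.erase a, gg f i = 2 * W - gg f a := by
    have := Finset.sum_erase_add Finset.univ (gg f) (Finset.mem_univ a)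
    omega
  have hR : ∑ v ∈ Finset.univ.filter (fun v : V => a ∈ v.1), (W + 2 * f v - 1)
      = 10 * W + 2 * gg f a - 10 := by
    rw [Finset.sum_sub_distrib, Finset.sum_add_distrib, Finset.sum_const,
      Finset.sum_const, ← Finset.mul_sum]
    have hga : gg f a = ∑ v ∈ Finset.univ.filter (fun v : V => a ∈ v.1), f v := rfl
    rw [nsmul_eq_mul, nsmul_eq_mul, card_Pa a, ← hga]
    ring
  omega


def f0 (v : V) : ℤ :=
  if v.1 ∈ ({{7,8},{7,9},{8,10},{9,10}} : Finset (Finset (Fin 11))) then 2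
  else if (v.1 ∩ ({7,8,9,10} : Finset (Fin 11))).card = 1 then -1 else 1

instance : DecidableRel (kneserGraph 11 2).Adj :=
  fun a b => decidable_of_iff (a ≠ b ∧ Disjoint a.1 b.1) Iff.rfl

set_option maxRecDepth 100000 in
lemma f0_sum : ∑ v : V, f0 v = 3 := by decide

set_option maxRecDepth 100000 in
lemma f0_vals : ∀ v : V, f0 v = -1 ∨ f0 v = 1 ∨ f0 v = 2 := by
  intro v
  unfold f0
  split_ifs <;> simp

set_option maxRecDepth 100000 in
lemma f0_dom : ∀ v : V, f0 v = -1 → ∃ u, (kneserGraph 11 2).Adj v u ∧ f0 u = 2 := by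
  decide

set_option maxRecDepth 100000 in
lemma f0_nbhd : ∀ v : V,
    1 ≤ f0 v + ∑ u ∈ Finset.univ.filter (fun u => (kneserGraph 11 2).Adj v u), f0 u := by
  decide

lemma f0_isSRDF : IsSRDF (kneserGraph 11 2) f0 := by
  refine ⟨f0_vals, f0_dom, fun v => ?_⟩
  rw [Finset.filter_congr_decidable]
  exact f0_nbhd v

end K112

theorem kneser112_signedRomanDomNum : signedRomanDomNum (kneserGraph 11 2) = 3 := by
  unfold signedRomanDomNum
  have hmem : (3:ℤ) ∈ {w | ∃ f, IsSRDF (kneserGraph 11 2) f ∧ ∑ v, f v = w} :=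
    ⟨K112.f0, K112.f0_isSRDF, K112.f0_sum⟩
  have hlb : ∀ w ∈ {w | ∃ f, IsSRDF (kneserGraph 11 2) f ∧ ∑ v, f v = w}, (3:ℤ) ≤ w := by
    rintro w ⟨f, hf, rfl⟩
    exact K112.lower_bound f hf
  exact le_antisymm (csInf_le ⟨3, fun w hw => hlb w hw⟩ hmem) (le_csInf ⟨3, hmem⟩ hlb)
end

section
/- For all integers n and k with k ≥ 2 and n ≥ k(k+1), the domination number of the Kneser graph K_{n,k} equals k+1, i.e. γ(K_{n,k}) = k+1. -/
lemma kneser_upper (n k : ℕ) (hk : 2 ≤ k) (hn : k * (k + 1) ≤ n) :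
    ∃ S : Finset {s : Finset (Fin n) // s.card = k},
      IsDominatingSet (kneserGraph n k) S ∧ S.card = k + 1 := by
  classical
  have hbound : ∀ (i : Fin (k+1)), ∀ m ∈ Finset.Ico (k * i.val) (k * i.val + k), m < n := by
    intro i m hm
    rw [Finset.mem_Ico] at hm
    have hi : i.val ≤ k := Nat.lt_succ_iff.mp i.isLt
    have : m < k * (k + 1) := by nlinarith [hm.2]
    omega
  set D : Fin (k+1) → Finset (Fin n) :=
    fun i => (Finset.Ico (k * i.val) (k * i.val + k)).attachFin (hbound i) with hD
  have hDcard : ∀ i, (D i).card = k := by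
    intro i; simp [hD, Finset.card_attachFin]
  have hDmem : ∀ i (x : Fin n), x ∈ D i ↔ k * i.val ≤ x.val ∧ x.val < k * i.val + k := by
    intro i x; simp [hD, Finset.mem_attachFin, Finset.mem_Ico]
  have hDdisj : ∀ i j, i ≠ j → Disjoint (D i) (D j) := by
    intro i j hij
    rw [Finset.disjoint_left]
    intro x hx hx'
    rw [hDmem] at hx hx'
    rcases Nat.lt_or_ge i.val j.val with h | h
    · have h1 : k * (i.val + 1) ≤ k * j.val := Nat.mul_le_mul_left k h
      have := hx.2; have := hx'.1
      nlinarith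
    · have h' : j.val < i.val := by
        rcases Nat.lt_or_ge j.val i.val with h2 | h2
        · exact h2
        · exact absurd (Fin.ext (Nat.le_antisymm h h2)).symm hij
      have h1 : k * (j.val + 1) ≤ k * i.val := Nat.mul_le_mul_left k h'
      have := hx'.2; have := hx.1
      nlinarith
  have hknz : 0 < k := by omega
  refine ⟨Finset.univ.image (fun i : Fin (k+1) => (⟨D i, hDcard i⟩ : {s : Finset (Fin n) // s.card = k})), ?_, ?_⟩
  · intro v hv
    -- pigeonhole: v.1 has k elements, there are k+1 disjoint D i
    by_contra hno
    push_neg at hno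
    have hmeet : ∀ i : Fin (k+1), ∃ x, x ∈ v.1 ∧ x ∈ D i := by
      intro i
      by_contra hdis
      push_neg at hdis
      have hdisj : Disjoint v.1 (D i) := Finset.disjoint_left.mpr hdis
      have hne : v ≠ ⟨D i, hDcard i⟩ := by
        intro h
        have : v.1 = D i := by rw [h]
        have : (D i).Nonempty := Finset.card_pos.mp (by rw [hDcard]; omega)
        obtain ⟨x, hx⟩ := this
        exact Finset.disjoint_left.mp hdisj (by rw [‹v.1 = D i›]; exact hx) hx
      exact hno ⟨D i, hDcard i⟩ (Finset.mem_image.mpr ⟨i, Finset.mem_univ i, rfl⟩) ⟨hne, hdisj⟩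
    choose g hg1 hg2 using hmeet
    have hinj : Function.Injective g := by
      intro i j hij
      by_contra hne
      exact Finset.disjoint_left.mp (hDdisj i j hne) (hg2 i) (hij ▸ hg2 j)
    have h1 : (Finset.univ : Finset (Fin (k+1))).card ≤ v.1.card :=
      Finset.card_le_card_of_injOn g (fun i _ => hg1 i) (fun a _ b _ h => hinj h)
    simp [v.2] at h1
  · rw [Finset.card_image_of_injective _ ?_, Finset.card_univ, Fintype.card_fin]
    intro i j hij
    have h : D i = D j := congrArg Subtype.val hij
    by_contra hne
    have : (D i).Nonempty := Finset.card_pos.mp (by rw [hDcard]; omega)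
    obtain ⟨x, hx⟩ := this
    exact Finset.disjoint_left.mp (hDdisj i j hne) hx (h ▸ hx)

lemma kneser_lower (n k : ℕ) (hk : 2 ≤ k) (hn : k * (k + 1) ≤ n)
    (S : Finset {s : Finset (Fin n) // s.card = k})
    (hS : IsDominatingSet (kneserGraph n k) S) : k + 1 ≤ S.card := by
  classical
  by_contra hlt
  push_neg at hlt
  have hScard : S.card ≤ k := by omega
  -- pick an element from each member of S
  have hpick : ∀ v : {s : Finset (Fin n) // s.card = k}, ∃ x, x ∈ v.1 := by
    intro v
    exact Finset.card_pos.mp (by rw [v.2]; omega)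
  choose pick hpick' using hpick
  set X : Finset (Fin n) := S.image pick with hX
  have hXcard : X.card ≤ k := le_trans (Finset.card_image_le) hScard
  set B : Finset (Fin n) := S.biUnion (fun s => s.1) with hB
  have hBcard : B.card ≤ k * k := by
    calc B.card ≤ ∑ s ∈ S, s.1.card := Finset.card_biUnion_le
      _ = ∑ s ∈ S, k := by
          apply Finset.sum_congr rfl; intro s _; exact s.2
      _ = S.card * k := by rw [Finset.sum_const, smul_eq_mul]
      _ ≤ k * k := Nat.mul_le_mul_right k hScard
  have hXB : X ⊆ B := by
    intro x hx
    rw [hX, Finset.mem_image] at hx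
    obtain ⟨s, hs, rfl⟩ := hx
    exact Finset.mem_biUnion.mpr ⟨s, hs, hpick' s⟩
  have hnk2 : k * k + k ≤ n := by nlinarith
  -- main claim: there is T of card k meeting every s ∈ S with ⟨T,_⟩ ∉ S
  have main : ∃ T : Finset (Fin n), ∃ hT : T.card = k,
      (∀ s ∈ S, ¬ Disjoint T s.1) ∧ (⟨T, hT⟩ : {s : Finset (Fin n) // s.card = k}) ∉ S := by
    rcases Nat.lt_or_ge X.card k with hXlt | hXge
    · -- extend X with fresh elements outside B
      have hcompl : k - X.card ≤ (Bᶜ : Finset (Fin n)).card := by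
        rw [Finset.card_compl, Fintype.card_fin]
        omega
      obtain ⟨W, hWsub, hWcard⟩ := Finset.exists_subset_card_eq hcompl
      have hWdisj : Disjoint X W := by
        apply Finset.disjoint_left.mpr
        intro x hx hxW
        exact (Finset.mem_compl.mp (hWsub hxW)) (hXB hx)
      have hTcard : (X ∪ W).card = k := by
        rw [Finset.card_union_of_disjoint hWdisj, hWcard]
        omega
      refine ⟨X ∪ W, hTcard, ?_, ?_⟩
      · intro s hs
        apply Finset.not_disjoint_iff.mpr
        exact ⟨pick s, Finset.mem_union_left _ (Finset.mem_image_of_mem pick hs), hpick' s⟩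
      · intro hmem
        have hWne : W.Nonempty := Finset.card_pos.mp (by omega)
        obtain ⟨w, hw⟩ := hWne
        have hwB : w ∉ B := Finset.mem_compl.mp (hWsub hw)
        exact hwB (Finset.mem_biUnion.mpr ⟨⟨X ∪ W, hTcard⟩, hmem, Finset.mem_union_right _ hw⟩)
    · -- X.card = k, so pick is injective on S
      have hXk : X.card = k := le_antisymm hXcard hXge
      have hSk : S.card = k := le_antisymm hScard (by
        calc k = X.card := hXk.symm
          _ ≤ S.card := Finset.card_image_le)
      have hinj : Set.InjOn pick S := by
        apply Finset.card_image_iff.mp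
        rw [← hX, hXk, hSk]
      by_cases hXS : (⟨X, hXk⟩ : {s : Finset (Fin n) // s.card = k}) ∈ S
      · -- swap: replace pick ⟨X,hXk⟩ by a fresh element
        set s₀ : {s : Finset (Fin n) // s.card = k} := ⟨X, hXk⟩ with hs₀
        have hzex : ∃ z : Fin n, z ∉ B := by
          have : B.card < n := by nlinarith
          have : (Bᶜ : Finset (Fin n)).Nonempty := by
            apply Finset.card_pos.mp
            rw [Finset.card_compl, Fintype.card_fin]; omega
          obtain ⟨z, hz⟩ := this
          exact ⟨z, Finset.mem_compl.mp hz⟩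
        obtain ⟨z, hzB⟩ := hzex
        have hzX : z ∉ X := fun h => hzB (hXB h)
        set x₀ := pick s₀ with hx₀
        have hx₀X : x₀ ∈ X := Finset.mem_image_of_mem pick hXS
        set T := insert z (X.erase x₀) with hT
        have hzT : z ∉ X.erase x₀ := fun h => hzX (Finset.mem_of_mem_erase h)
        have hTcard : T.card = k := by
          rw [hT, Finset.card_insert_of_notMem hzT, Finset.card_erase_of_mem hx₀X, hXk]
          omega
        refine ⟨T, hTcard, ?_, ?_⟩
        · intro s hs
          apply Finset.not_disjoint_iff.mpr
          by_cases hss : s = s₀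
          · -- T meets X = s₀.1: any element of X.erase x₀
            have : (X.erase x₀).Nonempty := by
              apply Finset.card_pos.mp
              rw [Finset.card_erase_of_mem hx₀X, hXk]; omega
            obtain ⟨y, hy⟩ := this
            refine ⟨y, Finset.mem_insert_of_mem hy, ?_⟩
            rw [hss, hs₀]
            exact Finset.mem_of_mem_erase hy
          · refine ⟨pick s, ?_, hpick' s⟩
            apply Finset.mem_insert_of_mem
            apply Finset.mem_erase.mpr
            refine ⟨?_, Finset.mem_image_of_mem pick hs⟩
            intro h
            exact hss (hinj hs hXS (h.trans hx₀))
        · intro hmem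
          exact hzB (Finset.mem_biUnion.mpr ⟨⟨T, hTcard⟩, hmem, Finset.mem_insert_self z _⟩)
      · refine ⟨X, hXk, ?_, hXS⟩
        intro s hs
        exact Finset.not_disjoint_iff.mpr ⟨pick s, Finset.mem_image_of_mem pick hs, hpick' s⟩
  obtain ⟨T, hT, hmeets, hTS⟩ := main
  obtain ⟨u, huS, hadj⟩ := hS ⟨T, hT⟩ hTS
  exact hmeets u huS hadj.2

theorem kneser_domNum (n k : ℕ) (hk : 2 ≤ k) (hn : k * (k + 1) ≤ n) :
    domNum (kneserGraph n k) = k + 1 := by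
  classical
  obtain ⟨S, hdom, hcard⟩ := kneser_upper n k hk hn
  have hmem : k + 1 ∈ {m | ∃ S : Finset {s : Finset (Fin n) // s.card = k},
      IsDominatingSet (kneserGraph n k) S ∧ S.card = m} := ⟨S, hdom, hcard⟩
  apply le_antisymm
  · exact Nat.sInf_le hmem
  · apply le_csInf ⟨k + 1, hmem⟩
    rintro m ⟨S', hS', rfl⟩
    exact kneser_lower n k hk hn S' hS'
end

section
/- Let k > 1 and n ≥ k(k+1), and let f be a Roman dominating function on the Kneser graph K_{n,k} with level sets V_i = {v : f(v) = i} for i = 0,1,2. If 1 ≤ |V_2| ≤ k−1, then |V_1| ≥ 2k. -/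
theorem rdf_V1_large_of_V2_small (n k : ℕ) (hk : 1 < k) (hn : k * (k + 1) ≤ n)
    (f : {s : Finset (Fin n) // s.card = k} → ℕ) (hf : IsRDF (kneserGraph n k) f)
    (h1 : 1 ≤ (Finset.univ.filter (fun v => f v = 2)).card)
    (h2 : (Finset.univ.filter (fun v => f v = 2)).card ≤ k - 1) :
    2 * k ≤ (Finset.univ.filter (fun v => f v = 1)).card := by
  classical
  set V2 := Finset.univ.filter (fun v : {s : Finset (Fin n) // s.card = k} => f v = 2) with hV2
  set V1 := Finset.univ.filter (fun v : {s : Finset (Fin n) // s.card = k} => f v = 1) with hV1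
  have hkpos : 0 < k := by omega
  -- transversal S of the sets in V2
  set g0 : {s : Finset (Fin n) // s.card = k} → Fin n :=
    fun v => v.1.min' (Finset.card_pos.mp (by rw [v.2]; exact hkpos)) with hg0
  set S : Finset (Fin n) := V2.image g0 with hS
  have hScard : S.card ≤ k - 1 := (Finset.card_image_le).trans h2
  -- extend S to a set B of size k-1
  have hcardFin : Fintype.card (Fin n) = n := Fintype.card_fin n
  obtain ⟨B, hSB, hBcard⟩ := Finset.exists_superset_card_eq (s := S) (n := k - 1)
    hScard (by rw [hcardFin]; have hkn : k ≤ k * (k + 1) := Nat.le_mul_of_pos_right k (by omega); omega)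
  -- pick a base vertex for the dummy branch
  obtain ⟨v0, hv0⟩ := Finset.card_pos.mp (lt_of_lt_of_le one_pos h1)
  have hins : ∀ x : Fin n, x ∉ B → (insert x B).card = k := by
    intro x hx
    rw [Finset.card_insert_of_notMem hx, hBcard]; omega
  set g : Fin n → {s : Finset (Fin n) // s.card = k} :=
    fun x => if hx : x ∈ B then v0 else ⟨insert x B, hins x hx⟩ with hg
  -- every g x for x ∉ B lies in V1 ∪ V2
  have hmaps : ∀ x ∈ Finset.univ \ B, g x ∈ V1 ∪ V2 := by
    intro x hx
    have hxB : x ∉ B := (Finset.mem_sdiff.mp hx).2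
    have hgx : g x = ⟨insert x B, hins x hxB⟩ := by simp [hg, hxB]
    have hfx : f (g x) ≠ 0 := by
      intro h0
      obtain ⟨u, hadj, hu2⟩ := hf.2 _ h0
      have huV2 : u ∈ V2 := by simp [hV2, hu2]
      have hmem : g0 u ∈ S := Finset.mem_image_of_mem _ huV2
      have hmemB : g0 u ∈ insert x B := Finset.mem_insert_of_mem (hSB hmem)
      have hmemu : g0 u ∈ u.1 := Finset.min'_mem _ _
      have hdisj : Disjoint (g x).1 u.1 := hadj.2
      exact (Finset.disjoint_left.mp hdisj (by rw [hgx]; exact hmemB)) hmemu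
    have hle := hf.1 (g x)
    have : f (g x) = 1 ∨ f (g x) = 2 := by omega
    rcases this with h | h <;> simp [hV1, hV2, h]
  have hinj : Set.InjOn g ↑(Finset.univ \ B) := by
    intro x hx y hy hxy
    have hxB : x ∉ B := (Finset.mem_sdiff.mp hx).2
    have hyB : y ∉ B := (Finset.mem_sdiff.mp hy).2
    have : (insert x B : Finset (Fin n)) = insert y B := by
      have := hxy
      simp only [hg, dif_neg hxB, dif_neg hyB] at this
      exact congrArg Subtype.val this
    have hxmem : x ∈ insert y B := this ▸ Finset.mem_insert_self x B
    rcases Finset.mem_insert.mp hxmem with h | h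
    · exact h
    · exact absurd h hxB
  have hcount : (Finset.univ \ B).card ≤ (V1 ∪ V2).card :=
    Finset.card_le_card_of_injOn g hmaps hinj
  have h3 : (Finset.univ \ B).card = n - (k - 1) := by
    rw [Finset.card_sdiff_of_subset (Finset.subset_univ B), Finset.card_univ, hcardFin, hBcard]
  have h4 : (V1 ∪ V2).card ≤ V1.card + V2.card := Finset.card_union_le _ _
  have hnk : 4 * k ≤ k * (k + 1) + 2 := by nlinarith
  have hn4 : 4 * k ≤ n + 2 := by omega
  omega
end

section
/- Let k > 1 and n ≥ k(k+1). Define f on the vertices of the Kneser graph K_{n,k} by f(v) = 2 if v is one of the k+1 pairwise disjoint k-element sets {ik+1, ik+2, …, (i+1)k} for i = 0, 1, …, k, and f(v) = 0 otherwise. Then f is a total Roman dominating function on K_{n,k} of weight 2(k+1). -/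
def kblock (n k i : ℕ) : Finset (Fin n) :=
  Finset.univ.filter (fun x : Fin n => i * k ≤ x.1 ∧ x.1 < (i + 1) * k)

lemma mem_kblock {n k i : ℕ} {x : Fin n} :
    x ∈ kblock n k i ↔ i * k ≤ x.1 ∧ x.1 < (i + 1) * k := by
  simp [kblock]

lemma kblock_card {n k i : ℕ} (h : (i + 1) * k ≤ n) : (kblock n k i).card = k := by
  have h2 : ∀ m ∈ Finset.Ico (i * k) ((i + 1) * k), m < n := fun m hm =>
    lt_of_lt_of_le (Finset.mem_Ico.mp hm).2 h
  have he : kblock n k i = Finset.attachFin (Finset.Ico (i * k) ((i + 1) * k)) h2 := by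
    ext x
    simp [kblock, Finset.mem_attachFin, Finset.mem_Ico]
  rw [he, Finset.card_attachFin, Nat.card_Ico, add_mul, one_mul, Nat.add_sub_cancel_left]

lemma kblock_disjoint {n k i j : ℕ} (hij : i ≠ j) :
    Disjoint (kblock n k i) (kblock n k j) := by
  rw [Finset.disjoint_left]
  intro x hx hx'
  rw [mem_kblock] at hx hx'
  rcases lt_or_gt_of_ne hij with h | h
  · have h2 : (i + 1) * k ≤ j * k := Nat.mul_le_mul_right k h
    exact lt_irrefl _ (lt_of_lt_of_le hx.2 (h2.trans hx'.1))
  · have h2 : (j + 1) * k ≤ i * k := Nat.mul_le_mul_right k h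
    exact lt_irrefl _ (lt_of_lt_of_le hx'.2 (h2.trans hx.1))

lemma kblock_inj {n k i j : ℕ} (hk : 0 < k) (hi : (i + 1) * k ≤ n)
    (h : kblock n k i = kblock n k j) : i = j := by
  have hlt : i * k < n := lt_of_lt_of_le (by rw [add_mul, one_mul]; exact Nat.lt_add_of_pos_right hk) hi
  have hx : (⟨i * k, hlt⟩ : Fin n) ∈ kblock n k i := by
    rw [mem_kblock]
    exact ⟨le_refl _, by rw [add_mul, one_mul]; exact Nat.lt_add_of_pos_right hk⟩
  rw [h, mem_kblock] at hx
  have h1 : j ≤ i := Nat.le_of_mul_le_mul_right hx.1 hk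
  have h2 : i < j + 1 := Nat.lt_of_mul_lt_mul_right hx.2
  omega

lemma exists_disjoint_block {n k : ℕ}
    (v : Finset (Fin n)) (hv : v.card = k) :
    ∃ i : Fin (k + 1), Disjoint v (kblock n k i.1) := by
  by_contra h
  push_neg at h
  have hchoice : ∀ i : Fin (k + 1), ∃ x, x ∈ v ∧ x ∈ kblock n k i.1 := fun i =>
    Finset.not_disjoint_iff.mp (h i)
  choose g hg1 hg2 using hchoice
  have hinj : Function.Injective g := by
    intro i j hij
    by_contra hne
    have h1 := hg2 i
    rw [hij] at h1
    exact Finset.disjoint_left.mp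
      (kblock_disjoint (fun hh => hne (Fin.ext hh))) h1 (hg2 j)
  have hle : (Finset.univ : Finset (Fin (k + 1))).card ≤ v.card :=
    Finset.card_le_card_of_injOn g (fun i _ => hg1 i) (Function.Injective.injOn hinj)
  simp only [Finset.card_univ, Fintype.card_fin, hv] at hle
  omega

theorem kneser_explicit_TRDF (n k : ℕ) (hk : 1 < k) (hn : k * (k + 1) ≤ n)
    (f : {s : Finset (Fin n) // s.card = k} → ℕ)
    (hf : ∀ v, f v = if ∃ i : Fin (k + 1),
        (v : Finset (Fin n)) =
          Finset.univ.filter (fun x : Fin n => i.1 * k ≤ x.1 ∧ x.1 < (i.1 + 1) * k)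
      then 2 else 0) :
    IsTRDF (kneserGraph n k) f ∧ ∑ v, f v = 2 * (k + 1) := by
  classical
  have hk0 : 0 < k := by omega
  have hf' : ∀ v : {s : Finset (Fin n) // s.card = k},
      f v = if ∃ i : Fin (k + 1), v.1 = kblock n k i.1 then 2 else 0 := by
    intro v
    rw [hf v]
    congr 1
  have hbound : ∀ i : Fin (k + 1), (i.1 + 1) * k ≤ n := by
    intro i
    calc (i.1 + 1) * k ≤ (k + 1) * k := Nat.mul_le_mul_right k (by omega)
    _ = k * (k + 1) := Nat.mul_comm _ _
    _ ≤ n := hn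
  have hcard : ∀ i : Fin (k + 1), (kblock n k i.1).card = k := fun i => kblock_card (hbound i)
  set g : Fin (k + 1) → {s : Finset (Fin n) // s.card = k} :=
    fun i => ⟨kblock n k i.1, hcard i⟩ with hgdef
  have hfg : ∀ i, f (g i) = 2 := by
    intro i
    rw [hf' (g i), if_pos ⟨i, rfl⟩]
  have hginj : Function.Injective g := by
    intro i j h
    have h2 : kblock n k i.1 = kblock n k j.1 := congrArg Subtype.val h
    exact Fin.ext (kblock_inj hk0 (hbound i) h2)
  have key : ∀ v, ∃ u, (kneserGraph n k).Adj v u ∧ f u = 2 := by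
    intro v
    by_cases hP : ∃ i : Fin (k + 1), v.1 = kblock n k i.1
    · obtain ⟨i, hi⟩ := hP
      refine ⟨g ⟨if i.1 = 0 then 1 else 0, by split_ifs <;> omega⟩, ⟨?_, ?_⟩, hfg _⟩
      · intro h
        have h2 : v.1 = kblock n k (if i.1 = 0 then 1 else 0) := congrArg Subtype.val h
        have h3 : i.1 = (if i.1 = 0 then 1 else 0) :=
          kblock_inj hk0 (hbound i) (hi ▸ h2)
        split_ifs at h3 <;> omega
      · have hd := kblock_disjoint (n := n) (k := k)
          (i := i.1) (j := if i.1 = 0 then 1 else 0) (by split_ifs <;> omega)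
        rwa [← hi] at hd
    · obtain ⟨i, hdisj⟩ := exists_disjoint_block v.1 v.2
      refine ⟨g i, ⟨?_, hdisj⟩, hfg i⟩
      intro h
      exact hP ⟨i, congrArg Subtype.val h⟩
  refine ⟨⟨⟨?_, fun v _ => key v⟩, ?_⟩, ?_⟩
  · intro v
    rw [hf' v]
    split_ifs <;> omega
  · intro v
    obtain ⟨u, hadj, hu2⟩ := key v
    have hmem : u ∈ Finset.univ.filter (fun u => (kneserGraph n k).Adj v u) := by
      simp [hadj]
    calc 1 ≤ f u := by omega
    _ ≤ ∑ u ∈ Finset.univ.filter (fun u => (kneserGraph n k).Adj v u), f u :=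
      Finset.single_le_sum (fun _ _ => Nat.zero_le _) hmem
  · have hsum1 : ∑ v, f v =
        ∑ v : {s : Finset (Fin n) // s.card = k},
          (if ∃ i : Fin (k + 1), v.1 = kblock n k i.1 then 2 else 0) :=
      Finset.sum_congr rfl (fun v _ => hf' v)
    rw [hsum1, ← Finset.sum_filter]
    have hset : (Finset.univ.filter
        (fun v : {s : Finset (Fin n) // s.card = k} =>
          ∃ i : Fin (k + 1), v.1 = kblock n k i.1)) =
        Finset.image g Finset.univ := by
      ext v
      simp only [Finset.mem_filter, Finset.mem_univ, true_and, Finset.mem_image]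
      constructor
      · rintro ⟨i, hi⟩
        exact ⟨i, Subtype.ext hi.symm⟩
      · rintro ⟨i, hi⟩
        exact ⟨i, (congrArg Subtype.val hi).symm⟩
    rw [hset, Finset.sum_const, Finset.card_image_of_injective _ hginj,
      Finset.card_univ, Fintype.card_fin, smul_eq_mul, Nat.mul_comm]
end
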